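/- Let f be a homeomorphism of a compact metric space (X,d) and let n be a positive integer. If f is n-expansive and has the shadowing property, then the chain recurrent set of f equals the closure of the set of periodic points of f, i.e. CR(f) = closure(Per(f)). -/

import Mathlib

open Metric Filter Set

variable {X : Type*} [MetricSpace X]

/-- The iterate of a homeomorphism by an integer power. -/
def hIter (f : X ≃ₜ X) (k : ℤ) (x : X) : X := (f.toEquiv ^ k) x

/-- The local stable set of `x` of size `c`:
points whose forward iterates stay `c`-close to those of `x`. -/
def localStable (f : X ≃ₜ X) (c : ℝ) (x : X) : Set X :=
  {y | ∀ k : ℕ, dist ((⇑f)^[k] y) ((⇑f)^[k] x) ≤ c}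

/-- The local unstable set of `x` of size `c`:
points whose backward iterates stay `c`-close to those of `x`. -/
def localUnstable (f : X ≃ₜ X) (c : ℝ) (x : X) : Set X :=
  {y | ∀ k : ℕ, dist ((⇑f.symm)^[k] y) ((⇑f.symm)^[k] x) ≤ c}

/-- The stable set of `x`. -/
def stableSet (f : X ≃ₜ X) (x : X) : Set X :=
  {y | Tendsto (fun k : ℕ => dist ((⇑f)^[k] y) ((⇑f)^[k] x)) atTop (nhds 0)}

/-- The unstable set of `x`. -/
def unstableSet (f : X ≃ₜ X) (x : X) : Set X :=
  {y | Tendsto (fun k : ℕ => dist ((⇑f.symm)^[k] y) ((⇑f.symm)^[k] x)) atTop (nhds 0)}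

/-- `f` is positively `n`-expansive: for some `c > 0` every local stable set of
size `c` contains at most `n` points. -/
def PosNExpansive (f : X ≃ₜ X) (n : ℕ) : Prop :=
  ∃ c > 0, ∀ x : X, ∀ S : Finset X, ↑S ⊆ localStable f c x → S.card ≤ n

/-- `f` is `n`-expansive: for some `c > 0` every dynamical ball of size `c`
contains at most `n` points. -/
def NExpansive (f : X ≃ₜ X) (n : ℕ) : Prop :=
  ∃ c > 0, ∀ x : X, ∀ S : Finset X,
    ↑S ⊆ localStable f c x ∩ localUnstable f c x → S.card ≤ n

/-- `f` is expansive. -/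
def Expansive (f : X ≃ₜ X) : Prop :=
  ∃ c > 0, ∀ x y : X, (∀ k : ℤ, dist (hIter f k x) (hIter f k y) ≤ c) → x = y

/-- `(x_k)_{k ∈ ℤ}` is a `δ`-pseudo-orbit. -/
def IsPseudoOrbit (f : X ≃ₜ X) (δ : ℝ) (x : ℤ → X) : Prop :=
  ∀ k : ℤ, dist (f (x k)) (x (k + 1)) < δ

/-- `(x_k)_{k ∈ ℤ}` is a two-sided limit pseudo-orbit:
`d(f(x_k), x_{k+1}) → 0` as `|k| → ∞`. -/
def IsTwoSidedLimitPseudoOrbit (f : X ≃ₜ X) (x : ℤ → X) : Prop :=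
  Tendsto (fun k : ℤ => dist (f (x k)) (x (k + 1))) cofinite (nhds 0)

/-- `z` `ε`-shadows the sequence `(x_k)_{k ∈ ℤ}`. -/
def Shadows (f : X ≃ₜ X) (ε : ℝ) (z : X) (x : ℤ → X) : Prop :=
  ∀ k : ℤ, dist (hIter f k z) (x k) < ε

/-- `z` two-sided limit shadows `(x_k)_{k ∈ ℤ}`. -/
def TwoSidedLimitShadows (f : X ≃ₜ X) (z : X) (x : ℤ → X) : Prop :=
  Tendsto (fun k : ℤ => dist (hIter f k z) (x k)) cofinite (nhds 0)

/-- The shadowing property. -/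
def ShadowingProperty (f : X ≃ₜ X) : Prop :=
  ∀ ε > 0, ∃ δ > 0, ∀ x : ℤ → X, IsPseudoOrbit f δ x → ∃ z : X, Shadows f ε z x

/-- The L-shadowing property. -/
def LShadowingProperty (f : X ≃ₜ X) : Prop :=
  ∀ ε > 0, ∃ δ > 0, ∀ x : ℤ → X, IsPseudoOrbit f δ x →
    IsTwoSidedLimitPseudoOrbit f x →
    ∃ z : X, Shadows f ε z x ∧ TwoSidedLimitShadows f z x

/-- Topological transitivity. -/
def TopTransitive (f : X ≃ₜ X) : Prop :=
  ∀ U V : Set X, IsOpen U → IsOpen V → U.Nonempty → V.Nonempty →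
    ∃ k : ℕ, ((⇑f)^[k] '' U ∩ V).Nonempty

/-- There is a nontrivial finite `ε`-pseudo-orbit from `x` to `y`. -/
def ChainFrom (f : X ≃ₜ X) (ε : ℝ) (x y : X) : Prop :=
  ∃ (l : ℕ) (c : ℕ → X), 0 < l ∧ c 0 = x ∧ c l = y ∧
    ∀ k < l, dist (f (c k)) (c (k + 1)) < ε

/-- `x` is a chain recurrent point of `f`. -/
def ChainRecurrent (f : X ≃ₜ X) (x : X) : Prop :=
  ∀ ε > 0, ChainFrom f ε x x

/-- The chain recurrent class of `x`. -/
def chainClass (f : X ≃ₜ X) (x : X) : Set X :=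
  {y | ∀ ε > 0, ChainFrom f ε x y ∧ ChainFrom f ε y x}

/-- `x` is a periodic point of `f`. -/
def Periodic (f : X ≃ₜ X) (x : X) : Prop :=
  ∃ k : ℕ, 1 ≤ k ∧ (⇑f)^[k] x = x

/-- `x` is a non-wandering point of `f`. -/
def NonWandering (f : X ≃ₜ X) (x : X) : Prop :=
  ∀ U : Set X, IsOpen U → x ∈ U → ∃ k : ℕ, 0 < k ∧ ((⇑f)^[k] '' U ∩ U).Nonempty

/-- The omega limit set of `x`: accumulation points of the forward orbit. -/
def omegaLimitSet (f : X ≃ₜ X) (x : X) : Set X :=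
  {y | ∃ φ : ℕ → ℕ, StrictMono φ ∧ Tendsto (fun n => (⇑f)^[φ n] x) atTop (nhds y)}

/-- `z` two-sided limit shadows `(x_k)` with gap `K`. -/
def TwoSidedLimitShadowsWithGap (f : X ≃ₜ X) (K : ℤ) (z : X) (x : ℤ → X) : Prop :=
  Tendsto (fun k : ℤ => dist (hIter f k z) (x k)) atBot (nhds 0) ∧
  Tendsto (fun k : ℤ => dist (hIter f (K + k) z) (x k)) atTop (nhds 0)

lemma hIter_add (f : X ≃ₜ X) (a b : ℤ) (x : X) : hIter f (a + b) x = hIter f a (hIter f b x) := by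
  simp [hIter, zpow_add, Equiv.Perm.mul_apply]

lemma hIter_zero' (f : X ≃ₜ X) (x : X) : hIter f 0 x = x := rfl

lemma hIter_one' (f : X ≃ₜ X) (x : X) : hIter f 1 x = f x := by simp [hIter]

lemma hIter_neg_one' (f : X ≃ₜ X) (x : X) : hIter f (-1) x = f.symm x := by
  simp only [hIter, zpow_neg, zpow_one]
  rfl

lemma hIter_natCast (f : X ≃ₜ X) (k : ℕ) (x : X) : hIter f (k : ℤ) x = (⇑f)^[k] x := by
  induction k with
  | zero => rfl
  | succ m ih =>
      rw [Function.iterate_succ_apply', ← ih]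
      rw [show ((m + 1 : ℕ) : ℤ) = 1 + (m : ℤ) by push_cast; ring, hIter_add, hIter_one']

lemma hIter_neg_natCast (f : X ≃ₜ X) (k : ℕ) (x : X) :
    hIter f (-(k : ℤ)) x = (⇑f.symm)^[k] x := by
  induction k with
  | zero => rfl
  | succ m ih =>
      rw [Function.iterate_succ_apply', ← ih]
      rw [show (-((m + 1 : ℕ) : ℤ)) = -1 + -(m:ℤ) by push_cast; ring, hIter_add, hIter_neg_one']

theorem stmt5 {X : Type*} [MetricSpace X] [CompactSpace X] (f : X ≃ₜ X) (n : ℕ)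
    (hn : 0 < n) (hexp : NExpansive f n) (hshad : ShadowingProperty f) :
    {x : X | ChainRecurrent f x} = closure {x : X | Periodic f x} := by
  classical
  obtain ⟨c, hc, hexp⟩ := hexp
  ext x
  simp only [mem_setOf_eq]
  constructor
  · intro hcr
    rw [Metric.mem_closure_iff]
    intro ε hε
    set ε' := min ε (c/2) with hε'def
    have hε'pos : 0 < ε' := lt_min hε (by linarith)
    have hε'c : ε' ≤ c/2 := min_le_right _ _
    have hε'ε : ε' ≤ ε := min_le_left _ _
    obtain ⟨δ, hδ, hsh⟩ := hshad ε' hε'pos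
    obtain ⟨l, cc, hl, h0, hll, hchain⟩ := hcr δ hδ
    set xs : ℤ → X := fun k => cc ((k % (l:ℤ)).toNat) with hxs
    have hlz : (0:ℤ) < (l:ℤ) := by exact_mod_cast hl
    have hpseudo : IsPseudoOrbit f δ xs := by
      intro k
      have h1 : 0 ≤ k % (l:ℤ) := Int.emod_nonneg _ (by omega)
      have h2 : k % (l:ℤ) < l := Int.emod_lt_of_pos _ hlz
      have hrl : (k % (l:ℤ)).toNat < l := by omega
      have hstep : (k+1) % (l:ℤ) = (k % l + 1) % l := by
        have hd : k = k % (l:ℤ) + l * (k / l) := (Int.emod_add_mul_ediv k l).symm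
        conv_lhs => rw [hd]
        rw [show k % (l:ℤ) + l * (k/l) + 1 = (k % l + 1) + l * (k/l) by ring]
        simp [Int.add_mul_emod_self_left]
      have e1 : xs (k+1) = cc (((k % (l:ℤ)).toNat + 1) % l) := by
        simp only [hxs]
        congr 1
        rw [hstep]
        rcases eq_or_lt_of_le (by omega : k % (l:ℤ) + 1 ≤ l) with he | hlt
        · have h' : (k % (l:ℤ)).toNat + 1 = l := by omega
          rw [he, Int.emod_self, h', Nat.mod_self]
          rfl
        · rw [Int.emod_eq_of_lt (by omega) hlt, Nat.mod_eq_of_lt (by omega)]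
          omega
      have e2 : cc (((k % (l:ℤ)).toNat + 1) % l) = cc ((k % (l:ℤ)).toNat + 1) := by
        rcases Nat.lt_or_ge ((k % (l:ℤ)).toNat + 1) l with h | h
        · rw [Nat.mod_eq_of_lt h]
        · have he : (k % (l:ℤ)).toNat + 1 = l := by omega
          rw [he, Nat.mod_self, h0, ← hll]
      rw [e1, e2]
      exact hchain _ hrl
    obtain ⟨z, hz⟩ := hsh xs hpseudo
    have hperiod : ∀ (k : ℤ) (j : ℕ), xs (k + j*l) = xs k := by
      intro k j
      simp only [hxs]
      congr 1
      have : (k + (j:ℤ)*(l:ℤ)) % l = k % l := Int.add_mul_emod_self_right _ _ _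
      rw [this]
    have hshift : ∀ (j : ℕ) (k : ℤ), dist (hIter f (k + j * l) z) (xs k) < ε' := by
      intro j k
      have := hz (k + j*l)
      rwa [hperiod k j] at this
    set g : ℕ → X := fun j => hIter f ((j:ℤ) * l) z with hg
    have hmem : ∀ j : ℕ, g j ∈ localStable f c z ∩ localUnstable f c z := by
      intro j
      constructor
      · intro k
        have e1 : (⇑f)^[k] (g j) = hIter f ((k:ℤ) + (j:ℤ)*l) z := by
          simp only [hg]
          rw [← hIter_natCast, ← hIter_add]
        have e2 : (⇑f)^[k] z = hIter f (k:ℤ) z := (hIter_natCast f k z).symm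
        rw [e1, e2]
        refine le_of_lt ?_
        calc dist (hIter f ((k:ℤ) + (j:ℤ)*l) z) (hIter f (k:ℤ) z)
            ≤ dist (hIter f ((k:ℤ) + (j:ℤ)*l) z) (xs k) + dist (xs k) (hIter f (k:ℤ) z) :=
              dist_triangle _ _ _
          _ < ε' + ε' := add_lt_add (hshift j k) (by rw [dist_comm]; exact hz k)
          _ ≤ c := by linarith
      · intro k
        have e1 : (⇑f.symm)^[k] (g j) = hIter f (-(k:ℤ) + (j:ℤ)*l) z := by
          simp only [hg]
          rw [← hIter_neg_natCast, ← hIter_add]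
        have e2 : (⇑f.symm)^[k] z = hIter f (-(k:ℤ)) z := (hIter_neg_natCast f k z).symm
        rw [e1, e2]
        refine le_of_lt ?_
        calc dist (hIter f (-(k:ℤ) + (j:ℤ)*l) z) (hIter f (-(k:ℤ)) z)
            ≤ dist (hIter f (-(k:ℤ) + (j:ℤ)*l) z) (xs (-(k:ℤ)))
              + dist (xs (-(k:ℤ))) (hIter f (-(k:ℤ)) z) := dist_triangle _ _ _
          _ < ε' + ε' := add_lt_add (hshift j (-(k:ℤ))) (by rw [dist_comm]; exact hz (-(k:ℤ)))
          _ ≤ c := by linarith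
    have hsub : ↑((Finset.range (n+1)).image g) ⊆ localStable f c z ∩ localUnstable f c z := by
      intro y hy
      simp only [Finset.coe_image, Set.mem_image, Finset.mem_coe, Finset.mem_range] at hy
      obtain ⟨j, _, rfl⟩ := hy
      exact hmem j
    have hcard := hexp z _ hsub
    obtain ⟨a, ha, b, hb, hab, heq⟩ := Finset.exists_ne_map_eq_of_card_lt_of_maps_to
      (t := (Finset.range (n+1)).image g)
      (by rw [Finset.card_range]; omega)
      (fun a ha => Finset.mem_image_of_mem g ha)
    have key : ∀ a b : ℕ, a < b → g a = g b → Periodic f z := by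
      intro a b hlt heq
      have hz' : z = hIter f (((b - a) * l : ℕ) : ℤ) z := by
        have h1 : hIter f (-((a:ℤ)*l)) (g a) = hIter f (-((a:ℤ)*l)) (g b) := by rw [heq]
        simp only [hg] at h1
        rw [← hIter_add, ← hIter_add] at h1
        have e3 : (-((a:ℤ)*l) + (a:ℤ)*l) = 0 := by ring
        have e4 : (-((a:ℤ)*l) + (b:ℤ)*l) = (((b - a) * l : ℕ) : ℤ) := by
          push_cast [Nat.cast_sub hlt.le]
          ring
        rw [e3, e4] at h1
        exact h1
      refine ⟨(b - a) * l, ?_, ?_⟩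
      · have : 1 ≤ b - a := by omega
        exact Nat.one_le_iff_ne_zero.mpr (by positivity)
      · rw [← hIter_natCast]
        exact hz'.symm
    have hzper : Periodic f z := by
      rcases lt_or_gt_of_ne hab with h | h
      · exact key a b h heq
      · exact key b a h heq.symm
    refine ⟨z, hzper, ?_⟩
    have h0' := hz 0
    have e5 : hIter f 0 z = z := rfl
    have e6 : xs 0 = x := by
      simp only [hxs]
      norm_num
      exact h0
    rw [e5, e6] at h0'
    rw [dist_comm]
    linarith
  · intro hx ε hε
    rw [Metric.mem_closure_iff] at hx
    obtain ⟨δ', hδ', hcont⟩ := Metric.continuousAt_iff.mp (f.continuous.continuousAt (x := x)) ε hε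
    obtain ⟨p, hpPer, hpx⟩ := hx (min ε δ') (lt_min hε hδ')
    rw [dist_comm] at hpx
    obtain ⟨k, hk1, hkper⟩ := hpPer
    have hper2 : (⇑f)^[2*k] p = p := by
      rw [two_mul, Function.iterate_add_apply, hkper, hkper]
    refine ⟨2*k, (fun m => if m = 0 ∨ 2*k ≤ m then x else (⇑f)^[m] p), by omega, by simp, by simp, ?_⟩
    intro m hm
    dsimp only
    by_cases hm0 : m = 0
    · subst hm0
      rw [if_pos (Or.inl rfl), if_neg (show ¬(0+1 = 0 ∨ 2*k ≤ 0+1) by omega)]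
      have h1 : dist p x < δ' := lt_of_lt_of_le hpx (min_le_right _ _)
      have h2 := hcont h1
      rw [dist_comm] at h2
      simpa using h2
    · rw [if_neg (by omega)]
      by_cases hm2 : m + 1 = 2*k
      · rw [if_pos (Or.inr (by omega))]
        rw [show f ((⇑f)^[m] p) = (⇑f)^[m+1] p from (Function.iterate_succ_apply' f m p).symm]
        rw [show m + 1 = 2*k from hm2, hper2]
        exact lt_of_lt_of_le hpx (min_le_left _ _)
      · rw [if_neg (by omega)]
        rw [show f ((⇑f)^[m] p) = (⇑f)^[m+1] p from (Function.iterate_succ_apply' f m p).symm]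
        simp [hε]
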